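/- Define Σ_{ij} = ∑_{k=1}^{min(i,j)} binom(i+j-2k, i-k) for positive integers i, j. Then Σ_{i1} = Σ_{1i} = 1 for all i ≥ 1, and for i, j ≥ 2, Σ_{ij} = Σ_{i-1,j} + Σ_{i,j-1} + δ_{ij}, where δ_{ij} is the Kronecker delta. -/

import Mathlib

/-- The path-model covariance entries with `ζ = γ = 2`. -/
def pascalCov (i j : ℕ) : ℕ :=
  ∑ k ∈ Finset.Icc 1 (min i j), (i + j - 2 * k).choose (i - k)

/-- Shifted version of `pascalCov`, indexed from 0. -/
def pcf (a b : ℕ) : ℕ :=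
  ∑ k ∈ Finset.range (min a b + 1), (a + b - 2 * k).choose (a - k)

lemma pascalCov_eq (a b : ℕ) : pascalCov (a + 1) (b + 1) = pcf a b := by
  unfold pascalCov pcf
  have hmin : min (a + 1) (b + 1) = min a b + 1 := by omega
  rw [hmin]
  have hset : Finset.Icc 1 (min a b + 1) =
      Finset.map ⟨fun k => k + 1, add_left_injective 1⟩ (Finset.range (min a b + 1)) := by
    ext x
    simp only [Finset.mem_map, Finset.mem_range, Finset.mem_Icc, Function.Embedding.coeFn_mk]
    constructor
    · rintro ⟨h1, h2⟩
      exact ⟨x - 1, by omega, by omega⟩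
    · rintro ⟨y, hy, rfl⟩
      omega
  rw [hset, Finset.sum_map]
  apply Finset.sum_congr rfl
  intro k _
  simp only [Function.Embedding.coeFn_mk]
  congr 1 <;> omega

lemma pcf_symm (a b : ℕ) : pcf a b = pcf b a := by
  unfold pcf
  rw [min_comm b a]
  apply Finset.sum_congr rfl
  intro k hk
  simp only [Finset.mem_range] at hk
  have hka : k ≤ a := by omega
  have hkb : k ≤ b := by omega
  rw [show a + b - 2 * k = (a - k) + (b - k) from by omega,
      show b + a - 2 * k = (a - k) + (b - k) from by omega]
  have h := Nat.choose_symm (show b - k ≤ (a - k) + (b - k) from by omega)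
  rw [Nat.add_sub_cancel] at h
  exact h

lemma pcf_rec_lt (a b : ℕ) (h : a < b) :
    pcf (a + 1) (b + 1) = pcf a (b + 1) + pcf (a + 1) b := by
  unfold pcf
  rw [show min (a + 1) (b + 1) = a + 1 from by omega,
      show min a (b + 1) = a from by omega,
      show min (a + 1) b = a + 1 from by omega,
      Finset.sum_range_succ, Finset.sum_range_succ (n := a + 1)]
  have hlast1 : (a + 1 + (b + 1) - 2 * (a + 1)).choose (a + 1 - (a + 1)) = 1 := by simp
  have hlast2 : (a + 1 + b - 2 * (a + 1)).choose (a + 1 - (a + 1)) = 1 := by simp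
  rw [hlast1, hlast2]
  have hsum : ∑ k ∈ Finset.range (a + 1), (a + 1 + (b + 1) - 2 * k).choose (a + 1 - k) =
      ∑ k ∈ Finset.range (a + 1),
        ((a + (b + 1) - 2 * k).choose (a - k) + (a + 1 + b - 2 * k).choose (a + 1 - k)) := by
    apply Finset.sum_congr rfl
    intro k hk
    simp only [Finset.mem_range] at hk
    have hka : k ≤ a := by omega
    rw [show a + (b + 1) - 2 * k = a + b + 1 - 2 * k from by omega,
        show a + 1 + b - 2 * k = a + b + 1 - 2 * k from by omega,
        show a + 1 + (b + 1) - 2 * k = (a + b + 1 - 2 * k) + 1 from by omega,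
        show a + 1 - k = (a - k) + 1 from by omega,
        Nat.choose_succ_succ]
  rw [hsum, Finset.sum_add_distrib]
  omega

lemma pcf_rec_eq (a : ℕ) :
    pcf (a + 1) (a + 1) = pcf a (a + 1) + pcf (a + 1) a + 1 := by
  unfold pcf
  rw [show min (a + 1) (a + 1) = a + 1 from by omega,
      show min a (a + 1) = a from by omega,
      show min (a + 1) a = a from by omega,
      Finset.sum_range_succ]
  have hlast : (a + 1 + (a + 1) - 2 * (a + 1)).choose (a + 1 - (a + 1)) = 1 := by simp
  rw [hlast]
  have hsum : ∑ k ∈ Finset.range (a + 1), (a + 1 + (a + 1) - 2 * k).choose (a + 1 - k) =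
      ∑ k ∈ Finset.range (a + 1),
        ((a + (a + 1) - 2 * k).choose (a - k) + (a + 1 + a - 2 * k).choose (a + 1 - k)) := by
    apply Finset.sum_congr rfl
    intro k hk
    simp only [Finset.mem_range] at hk
    have hka : k ≤ a := by omega
    rw [show a + (a + 1) - 2 * k = a + a + 1 - 2 * k from by omega,
        show a + 1 + a - 2 * k = a + a + 1 - 2 * k from by omega,
        show a + 1 + (a + 1) - 2 * k = (a + a + 1 - 2 * k) + 1 from by omega,
        show a + 1 - k = (a - k) + 1 from by omega,
        Nat.choose_succ_succ]
  rw [hsum, Finset.sum_add_distrib]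

lemma pcf_rec (a b : ℕ) :
    pcf (a + 1) (b + 1) = pcf a (b + 1) + pcf (a + 1) b + (if a = b then 1 else 0) := by
  rcases lt_trichotomy a b with h | h | h
  · rw [if_neg (by omega), add_zero]
    exact pcf_rec_lt a b h
  · subst h
    rw [if_pos rfl, pcf_rec_eq]
  · rw [if_neg (by omega), add_zero, pcf_symm (a + 1) (b + 1), pcf_rec_lt b a h,
      pcf_symm b (a + 1), pcf_symm (b + 1) a, Nat.add_comm]

/-- First row/column and recursion of the `ζ = γ = 2` path-model covariance. -/
theorem pascalCov_recursion :
    (∀ i, 1 ≤ i → pascalCov i 1 = 1 ∧ pascalCov 1 i = 1) ∧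
      ∀ i j, 2 ≤ i → 2 ≤ j →
        pascalCov i j =
          pascalCov (i - 1) j + pascalCov i (j - 1) + (if i = j then 1 else 0) := by
  constructor
  · intro i hi
    constructor
    · rw [pascalCov, show min i 1 = 1 from by omega]
      rw [show Finset.Icc 1 1 = {1} from rfl, Finset.sum_singleton]
      rw [show i + 1 - 2 * 1 = i - 1 from by omega, Nat.choose_self]
    · rw [pascalCov, show min 1 i = 1 from by omega]
      rw [show Finset.Icc 1 1 = {1} from rfl, Finset.sum_singleton]
      simp
  · intro i j hi hj
    obtain ⟨a, rfl⟩ : ∃ a, i = a + 2 := ⟨i - 2, by omega⟩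
    obtain ⟨b, rfl⟩ : ∃ b, j = b + 2 := ⟨j - 2, by omega⟩
    rw [show a + 2 - 1 = a + 1 from by omega, show b + 2 - 1 = b + 1 from by omega,
      show a + 2 = (a + 1) + 1 from rfl, show b + 2 = (b + 1) + 1 from rfl,
      pascalCov_eq, pascalCov_eq, pascalCov_eq, pcf_rec]
    congr 1
    simp
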